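/- Let γ: [a,b) → M be a future-inextendible causal curve in a spacetime such that no final segment γ|_(c,b) is an achronal null geodesic ray. Then there exists an increasing sequence t_n ↗ b with γ(t_n) ≪ γ(t_{n+1}) for all n, and hence a future-inextendible timelike curve η with I⁻(η) = I⁻(γ) and ↑η = ↑γ. In particular γ is future-regular. -/
import Mathlib


open Set

/-- If no final segment of the future-inextendible causal curve `γ : [a,b) → M` is an
achronal null geodesic ray (i.e. every final segment contains a chronologically related
pair of points), then there is an increasing sequence `t_n ↗ b` with
`γ(t_n) ≪ γ(t_{n+1})`; hence the future chain `γ(t_n)` (a timelike curve `η`) has the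
same past and the same common future as `γ`; in particular `γ` is future-regular:
`↑γ = ↑I⁻(γ)`. -/
theorem stmt_9 {M : Type*} (lt le : M → M → Prop)
    (hlttrans : ∀ {x y z : M}, lt x y → lt y z → lt x z)
    (hpush : ∀ {x y z : M}, le x y → lt y z → lt x z)
    (hpush' : ∀ {x y z : M}, lt x y → le y z → lt x z)
    (a b : ℝ) (hab : a < b) (γ : ℝ → M)
    (hcausal : ∀ s t, a ≤ s → s ≤ t → t < b → le (γ s) (γ t))
    (hnotnull : ∀ c, a ≤ c → c < b → ∃ s t, c < s ∧ s < t ∧ t < b ∧ lt (γ s) (γ t)) :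
    ∃ tseq : ℕ → ℝ, StrictMono tseq ∧ (∀ n, tseq n ∈ Ico a b) ∧
      Filter.Tendsto tseq Filter.atTop (nhds b) ∧
      (∀ n, lt (γ (tseq n)) (γ (tseq (n + 1)))) ∧
      ((⋃ n, {x | lt x (γ (tseq n))}) = (⋃ t ∈ Ico a b, {x | lt x (γ t)})) ∧
      ({x | ∃ q, (∀ n, lt (γ (tseq n)) q) ∧ lt q x} =
        {x | ∃ q, (∀ t ∈ Ico a b, lt (γ t) q) ∧ lt q x}) ∧
      ({x | ∃ q, (∀ t ∈ Ico a b, lt (γ t) q) ∧ lt q x} =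
        {x | ∃ q, (∀ y ∈ ⋃ t ∈ Ico a b, {z | lt z (γ t)}, lt y q) ∧ lt q x}) := by
  classical
  have hnext : ∀ (n : ℕ) (t : ℝ), t ∈ Ico a b →
      ∃ t', t' ∈ Ico a b ∧ t < t' ∧ b - 1/(n+1) < t' ∧ lt (γ t) (γ t') := by
    intro n t ht
    set c := max t (b - 1/(n+1 : ℝ)) with hc
    have hca : a ≤ c := le_trans ht.1 (le_max_left _ _)
    have hcb : c < b := max_lt ht.2 (sub_lt_self b (by positivity))
    obtain ⟨s, t', hcs, hst, ht'b, hlt⟩ := hnotnull c hca hcb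
    refine ⟨t', ⟨le_of_lt (lt_trans (lt_of_le_of_lt hca hcs) hst), ht'b⟩,
      lt_trans (lt_of_le_of_lt (le_max_left _ _) hcs) hst,
      lt_trans (lt_of_le_of_lt (le_max_right _ _) hcs) hst, ?_⟩
    exact hpush (hcausal t s ht.1
      (le_of_lt (lt_of_le_of_lt (le_max_left _ _) hcs)) (lt_trans hst ht'b)) hlt
  choose next hmem hgt hbd hchron using hnext
  let f : ℕ → {x : ℝ // x ∈ Ico a b} := fun n =>
    Nat.rec ⟨a, ⟨le_refl a, hab⟩⟩ (fun n p => ⟨next n p.1 p.2, hmem n p.1 p.2⟩) n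
  set tseq : ℕ → ℝ := fun n => (f n).1 with htseq
  have hmemn : ∀ n, tseq n ∈ Ico a b := fun n => (f n).2
  have hsucc : ∀ n, tseq (n+1) = next n (tseq n) (f n).2 := fun n => rfl
  have h1 : ∀ n, tseq n < tseq (n+1) := fun n => hgt n _ _
  have hbdn : ∀ n : ℕ, b - 1/(n+1) < tseq (n+1) := fun n => hbd n _ _
  have hchr : ∀ n, lt (γ (tseq n)) (γ (tseq (n+1))) := fun n => hchron n _ _
  have hmono : StrictMono tseq := strictMono_nat_of_lt_succ h1
  have htend : Filter.Tendsto tseq Filter.atTop (nhds b) := by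
    apply tendsto_of_tendsto_of_tendsto_of_le_of_le'
      (g := fun n : ℕ => b - 1/(n : ℝ)) (h := fun _ : ℕ => b)
    · have : Filter.Tendsto (fun n : ℕ => 1/(n : ℝ)) Filter.atTop (nhds 0) :=
        tendsto_one_div_atTop_nhds_zero_nat
      simpa using Filter.Tendsto.const_sub b this
    · exact tendsto_const_nhds
    · filter_upwards [Filter.eventually_ge_atTop 1] with n hn
      obtain ⟨m, rfl⟩ := Nat.exists_eq_add_of_le hn
      rw [add_comm 1 m]
      have := hbdn m
      push_cast
      push_cast at this
      linarith [this]
    · filter_upwards with n using le_of_lt (hmemn n).2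
  -- key: any t < b is eventually below tseq n
  have hdom : ∀ t : ℝ, t < b → ∃ n, t ≤ tseq n := by
    intro t ht
    obtain ⟨n, hn⟩ := (htend.eventually (eventually_gt_nhds ht)).exists
    exact ⟨n, le_of_lt hn⟩
  -- every γ t is in the chronological past of γ
  have hpast : ∀ t ∈ Ico a b, ∃ t' ∈ Ico a b, lt (γ t) (γ t') := by
    intro t ht
    obtain ⟨s, t', hts, hst, ht'b, hlt⟩ := hnotnull t ht.1 ht.2
    exact ⟨t', ⟨le_of_lt (lt_trans (lt_of_le_of_lt ht.1 hts) hst), ht'b⟩,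
      hpush (hcausal t s ht.1 (le_of_lt hts) (lt_trans hst ht'b)) hlt⟩
  refine ⟨tseq, hmono, hmemn, htend, hchr, ?_, ?_, ?_⟩
  · ext x
    simp only [mem_iUnion, mem_setOf_eq, exists_prop]
    constructor
    · rintro ⟨n, hn⟩
      exact ⟨tseq n, hmemn n, hn⟩
    · rintro ⟨t, ht, hx⟩
      obtain ⟨n, hn⟩ := hdom t ht.2
      exact ⟨n, hpush' hx (hcausal t (tseq n) ht.1 hn (hmemn n).2)⟩
  · ext x
    simp only [mem_setOf_eq]
    constructor
    · rintro ⟨q, hq, hqx⟩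
      refine ⟨q, fun t ht => ?_, hqx⟩
      obtain ⟨n, hn⟩ := hdom t ht.2
      exact hpush (hcausal t (tseq n) ht.1 hn (hmemn n).2) (hq n)
    · rintro ⟨q, hq, hqx⟩
      exact ⟨q, fun n => hq _ (hmemn n), hqx⟩
  · ext x
    simp only [mem_setOf_eq, mem_iUnion, exists_prop]
    constructor
    · rintro ⟨q, hq, hqx⟩
      refine ⟨q, ?_, hqx⟩
      rintro y hy
      obtain ⟨t, ht, hyt⟩ := hy
      exact hlttrans hyt (hq t ht)
    · rintro ⟨q, hq, hqx⟩
      refine ⟨q, fun t ht => ?_, hqx⟩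
      obtain ⟨t', ht', hlt⟩ := hpast t ht
      exact hq _ ⟨t', ht', hlt⟩
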